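/- arXiv:2003.09130 — 7 statements merged into one kernel-verified Lean document; each statement's English description precedes it below -/
import Mathlib

section
/- Let K be an algebraically closed valued field of residue characteristic 0, let B be a ball in K (a set of the form {x : val(x − c) ≥ γ} or {x : val(x − c) > γ}), and let P(x) ∈ K[x] be a polynomial. If P has two distinct zeros in B, then the derivative P′ has a zero in B. -/
open Polynomial

/-- Newton polygon lemma: if every root of `R` has valuation (multiplicatively) bigger than
`v t`, then the constant coefficient strictly dominates `coeff (m+1) * t^(m+1)`. -/
lemma rolle_aux {K Γ₀ : Type*} [Field K] [IsAlgClosed K]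
    [LinearOrderedCommGroupWithZero Γ₀] (v : Valuation K Γ₀) (t : K) (ht : v t ≠ 0) :
    ∀ (n : ℕ) (R : Polynomial K), R.natDegree ≤ n → R ≠ 0 →
      (∀ s : K, R.IsRoot s → v t < v s) →
      ∀ m : ℕ, v (R.coeff (m + 1)) * v t ^ (m + 1) < v (R.coeff 0) := by
  intro n
  induction n with
  | zero =>
      intro R hdeg hR0 _ m
      obtain ⟨c, rfl⟩ := Polynomial.natDegree_eq_zero.mp (Nat.le_zero.mp hdeg)
      have hc : c ≠ 0 := fun h => hR0 (by simp [h])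
      simpa using zero_lt_iff.mpr ((v.ne_zero_iff).mpr hc)
  | succ n ih =>
      intro R hdeg hR0 hroots m
      rcases Nat.eq_zero_or_pos R.natDegree with h0 | hpos
      · obtain ⟨c, rfl⟩ := Polynomial.natDegree_eq_zero.mp h0
        have hc : c ≠ 0 := fun h => hR0 (by simp [h])
        simpa using zero_lt_iff.mpr ((v.ne_zero_iff).mpr hc)
      · -- peel off a root
        obtain ⟨s, hs⟩ := IsAlgClosed.exists_root R (by
          rw [Polynomial.degree_eq_natDegree hR0]
          exact_mod_cast hpos.ne')
        obtain ⟨R₁, hfac⟩ := (Polynomial.dvd_iff_isRoot.mpr hs)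
        have hR₁0 : R₁ ≠ 0 := by
          rintro rfl; exact hR0 (by simp [hfac])
        have hdeg₁ : R₁.natDegree ≤ n := by
          have := Polynomial.natDegree_mul (Polynomial.X_sub_C_ne_zero s) hR₁0
          rw [hfac, this, Polynomial.natDegree_X_sub_C] at hdeg
          omega
        have hroots₁ : ∀ z : K, R₁.IsRoot z → v t < v z := by
          intro z hz
          refine hroots z ?_
          rw [Polynomial.IsRoot, hfac, Polynomial.eval_mul, hz.eq_zero, mul_zero]
        have ihR := ih R₁ hdeg₁ hR₁0 hroots₁
        have hvs : v t < v s := hroots s hs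
        have hs0 : v s ≠ 0 := fun h => by simp [h] at hvs
        have hc0 : R₁.coeff 0 ≠ 0 := by
          intro h
          have : R₁.IsRoot 0 := by
            rwa [Polynomial.IsRoot, ← Polynomial.coeff_zero_eq_eval_zero]
          have := hroots₁ 0 this
          simp at this
        have hvc0 : v (R₁.coeff 0) ≠ 0 := (v.ne_zero_iff).mpr hc0
        -- coefficient formulas
        have hcoeff0 : R.coeff 0 = -s * R₁.coeff 0 := by
          rw [hfac, Polynomial.mul_coeff_zero]
          simp
        have hcoeffm : R.coeff (m + 1) = R₁.coeff m - s * R₁.coeff (m + 1) := by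
          rw [hfac, sub_mul, Polynomial.coeff_sub, Polynomial.coeff_X_mul,
            Polynomial.coeff_C_mul]
        have hv0 : v (R.coeff 0) = v s * v (R₁.coeff 0) := by
          rw [hcoeff0, neg_mul, v.map_neg, v.map_mul]
        -- first term estimate
        have hterm1 : v (R₁.coeff m) * v t ^ (m + 1) < v s * v (R₁.coeff 0) := by
          have hle : v (R₁.coeff m) * v t ^ m ≤ v (R₁.coeff 0) := by
            cases m with
            | zero => simp
            | succ k => exact (ihR k).le
          calc v (R₁.coeff m) * v t ^ (m + 1) = (v (R₁.coeff m) * v t ^ m) * v t := by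
                rw [pow_succ, ← mul_assoc]
            _ ≤ v (R₁.coeff 0) * v t := mul_le_mul_left hle _
            _ < v (R₁.coeff 0) * v s := by
                exact mul_lt_mul_of_pos_left hvs (zero_lt_iff.mpr hvc0)
            _ = v s * v (R₁.coeff 0) := mul_comm _ _
        have hterm2 : v s * v (R₁.coeff (m + 1)) * v t ^ (m + 1) < v s * v (R₁.coeff 0) := by
          rw [mul_assoc]
          exact mul_lt_mul_of_pos_left (ihR m) (zero_lt_iff.mpr hs0)
        rw [hcoeffm, hv0]
        calc v (R₁.coeff m - s * R₁.coeff (m + 1)) * v t ^ (m + 1)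
            ≤ max (v (R₁.coeff m)) (v (s * R₁.coeff (m + 1))) * v t ^ (m + 1) :=
              mul_le_mul_left (v.map_sub _ _) _
          _ = max (v (R₁.coeff m) * v t ^ (m + 1)) (v s * v (R₁.coeff (m + 1)) * v t ^ (m + 1)) := by
              rw [max_mul_mul_right, v.map_mul]
          _ < v s * v (R₁.coeff 0) := max_lt hterm1 hterm2

/-- valued-field Rolle theorem.  Let `K` be an algebraically closed valued
field of characteristic 0 with residue characteristic 0 (every nonzero integer has valuation
`1`), with valuation written multiplicatively.  Let `B` be a ball (closed `{x | v (x−c) ≤ γ}`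
or open `{x | v (x−c) < γ}`, corresponding to `val(x−c) ≥ γ` resp. `> γ` additively) and
`P ∈ K[x]` a polynomial.  If `P` has two distinct zeros in `B`, then `P'` has a zero in `B`. -/
theorem rolle_acvf {K Γ₀ : Type*} [Field K] [IsAlgClosed K] [CharZero K]
    [LinearOrderedCommGroupWithZero Γ₀] (v : Valuation K Γ₀)
    (hres : ∀ m : ℕ, m ≠ 0 → v (m : K) = 1)
    (B : Set K)
    (hB : (∃ c γ, B = {x : K | v (x - c) ≤ γ}) ∨ (∃ c γ, B = {x : K | v (x - c) < γ}))
    (P : Polynomial K) (x y : K) (hx : x ∈ B) (hy : y ∈ B) (hxy : x ≠ y)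
    (hPx : P.eval x = 0) (hPy : P.eval y = 0) :
    ∃ z ∈ B, (Polynomial.derivative P).eval z = 0 := by
  -- trivial case: zero derivative
  by_cases hP' : Polynomial.derivative P = 0
  · exact ⟨x, hx, by simp [hP']⟩
  set t : K := y - x with ht_def
  have ht0 : t ≠ 0 := sub_ne_zero_of_ne (Ne.symm hxy)
  have hvt : v t ≠ 0 := (v.ne_zero_iff).mpr ht0
  -- shifted polynomial
  set Q : Polynomial K := P.comp (X + C x) with hQ_def
  have hQeval : ∀ z : K, Q.eval z = P.eval (z + x) := by
    intro z; simp [hQ_def]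
  have hQ'def : Polynomial.derivative Q = (Polynomial.derivative P).comp (X + C x) := by
    rw [hQ_def, Polynomial.derivative_comp]
    simp
  have hQ'eval : ∀ z : K, (Polynomial.derivative Q).eval z
      = (Polynomial.derivative P).eval (z + x) := by
    intro z; rw [hQ'def]; simp
  have hQ'0 : Polynomial.derivative Q ≠ 0 := by
    rw [hQ'def]
    intro h
    rcases (Polynomial.comp_eq_zero_iff).mp h with h1 | h2
    · exact hP' h1
    · have h3 := h2.2
      have h4 : (X + C x : Polynomial K).natDegree = 0 := by rw [h3]; simp
      simp [Polynomial.natDegree_X_add_C] at h4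
  -- key claim: Q' has a root of valuation ≤ v t
  have key : ∃ z : K, (Polynomial.derivative Q).IsRoot z ∧ v z ≤ v t := by
    by_contra hcon
    push_neg at hcon
    have hroots : ∀ s : K, (Polynomial.derivative Q).IsRoot s → v t < v s :=
      fun s hs => hcon s hs
    have haux := rolle_aux v t hvt (Polynomial.derivative Q).natDegree
      (Polynomial.derivative Q) le_rfl hQ'0 hroots
    -- constant coefficient of Q' is nonzero
    have hc0 : (Polynomial.derivative Q).coeff 0 ≠ 0 := by
      intro h
      have h0 : (Polynomial.derivative Q).IsRoot 0 := by
        rwa [Polynomial.IsRoot, ← Polynomial.coeff_zero_eq_eval_zero]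
      have := hroots 0 h0
      simp at this
    have hvc0 : v ((Polynomial.derivative Q).coeff 0) ≠ 0 := (v.ne_zero_iff).mpr hc0
    -- relate coefficients of Q and Q'
    have hcoeff : ∀ i : ℕ, v (Q.coeff (i + 1)) = v ((Polynomial.derivative Q).coeff i) := by
      intro i
      have hcast : ((i : K) + 1) = ((i + 1 : ℕ) : K) := by push_cast; ring
      rw [Polynomial.coeff_derivative, v.map_mul, hcast, hres (i + 1) (Nat.succ_ne_zero i),
        mul_one]
    -- Q has positive degree
    have hn1 : 1 ≤ Q.natDegree := by
      by_contra h
      push_neg at h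
      obtain ⟨c, hc⟩ := Polynomial.natDegree_eq_zero.mp (Nat.lt_one_iff.mp h)
      exact hQ'0 (by rw [show Q = C c from hc.symm]; simp)
    -- evaluate Q at t
    have hQt : Q.eval t = 0 := by rw [hQeval]; simp [ht_def, hPy]
    have hQ0 : Q.coeff 0 = 0 := by
      rw [Polynomial.coeff_zero_eq_eval_zero, hQeval]; simpa using hPx
    have hsum : Q.eval t = ∑ i ∈ Finset.range Q.natDegree, Q.coeff (i + 1) * t ^ (i + 1) := by
      rw [Polynomial.eval_eq_sum_range, Finset.sum_range_succ']
      simp [hQ0]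
    have hmem : (0 : ℕ) ∈ Finset.range Q.natDegree := Finset.mem_range.mpr hn1
    have h0ne : v (Q.coeff (0 + 1) * t ^ (0 + 1)) ≠ 0 := by
      rw [v.map_mul, v.map_pow, hcoeff]
      exact mul_ne_zero hvc0 (pow_ne_zero _ hvt)
    -- the i = 0 term strictly dominates
    have hdom : ∀ i : ℕ, i ≠ 0 →
        v (Q.coeff (i + 1) * t ^ (i + 1)) < v (Q.coeff (0 + 1) * t ^ (0 + 1)) := by
      intro i hi
      obtain ⟨k, rfl⟩ : ∃ k, i = k + 1 := ⟨i - 1, by omega⟩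
      rw [v.map_mul, v.map_mul, v.map_pow, v.map_pow, hcoeff, hcoeff]
      have h1 : v ((Polynomial.derivative Q).coeff (k + 1)) * v t ^ (k + 1)
          < v ((Polynomial.derivative Q).coeff 0) := haux k
      calc v ((Polynomial.derivative Q).coeff (k + 1)) * v t ^ (k + 1 + 1)
          = v t * (v ((Polynomial.derivative Q).coeff (k + 1)) * v t ^ (k + 1)) := by
            rw [pow_succ, ← mul_assoc, mul_comm]
        _ < v t * v ((Polynomial.derivative Q).coeff 0) :=
            mul_lt_mul_of_pos_left h1 (zero_lt_iff.mpr hvt)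
        _ = v ((Polynomial.derivative Q).coeff 0) * v t ^ (0 + 1) := by
            rw [pow_one, mul_comm]
    have := v.map_sum_eq_of_lt (f := fun i => Q.coeff (i + 1) * t ^ (i + 1)) hmem
      (by intro i hi
          refine hdom i ?_
          rintro rfl
          simp at hi)
    rw [← hsum, hQt, v.map_zero] at this
    exact h0ne this.symm
  obtain ⟨z, hz, hvz⟩ := key
  refine ⟨z + x, ?_, by rw [← hQ'eval]; exact hz⟩
  -- ball membership
  have hball : ∀ c : K, v (z + x - c) ≤ max (v (y - c)) (v (x - c)) := by
    intro c
    have h1 : v (z + x - c) ≤ max (v z) (v (x - c)) := by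
      have : z + x - c = z + (x - c) := by ring
      rw [this]; exact v.map_add _ _
    have h2 : v z ≤ max (v (y - c)) (v (x - c)) := by
      refine hvz.trans ?_
      have : t = (y - c) - (x - c) := by rw [ht_def]; ring
      rw [this]; exact v.map_sub _ _
    exact h1.trans (max_le h2 (le_max_right _ _))
  rcases hB with ⟨c, γ, rfl⟩ | ⟨c, γ, rfl⟩
  · exact (hball c).trans (max_le hy hx)
  · exact lt_of_le_of_lt (hball c) (max_lt hy hx)
end

section
/- Let K be a field with valuation ring 𝒪, maximal ideal 𝔪, residue field k, and value group Γ, and let D be a mock K/𝔪, i.e., a divisible 𝒪-module equipped with an embedding k ↪ D such that for all x, y ∈ D, x ∈ 𝒪·y or y ∈ 𝒪·x. If K and D are countable, then D is isomorphic, as an 𝒪-module extension of k, to K/𝔪. -/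
set_option maxHeartbeats 1000000
set_option synthInstance.maxHeartbeats 400000


variable {K Γ₀ : Type*} [Field K] [LinearOrderedCommGroupWithZero Γ₀]

/-- The maximal ideal `𝔪 = {x | v x < 1}` of the valuation, as a submodule of `K`
over the valuation ring `v.integer`. -/
def maxIdealSub (v : Valuation K Γ₀) : Submodule v.integer K where
  carrier := {x : K | v x < 1}
  add_mem' := by
    intro a b ha hb
    exact lt_of_le_of_lt (v.map_add a b) (max_lt ha hb)
  zero_mem' := by simp
  smul_mem' := by
    intro c x hx
    have h1 : v (c : K) ≤ 1 := c.2
    have h : (c • x : K) = (c : K) * x := rfl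
    rw [Set.mem_setOf_eq, h, v.map_mul]
    calc v (c : K) * v x ≤ 1 * v x := mul_le_mul_left h1 _
      _ = v x := one_mul _
      _ < 1 := hx

/-- The maximal ideal of the valuation ring `v.integer`. -/
def maxIdealO (v : Valuation K Γ₀) : Ideal v.integer :=
  (maxIdealSub v).comap (Algebra.linearMap v.integer K)

/-- The natural embedding of the residue field `k = 𝒪/𝔪` into `K/𝔪`. -/
noncomputable def residueToQuot (v : Valuation K Γ₀) :
    (v.integer ⧸ maxIdealO v) →ₗ[v.integer] K ⧸ maxIdealSub v :=
  Submodule.mapQ _ _ (Algebra.linearMap v.integer K) le_rfl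

/-- Abstract back-and-forth construction: two countable uniserial divisible modules with
matching annihilator behaviour relative to distinguished nonzero elements are isomorphic. -/
private lemma exists_iso_aux {R M N : Type*} [CommRing R] [AddCommGroup M] [Module R M]
    [AddCommGroup N] [Module R N] [Countable M] [Countable N]
    (eM : M) (eN : N) (hM0 : eM ≠ 0) (hN0 : eN ≠ 0) (A : R → R → Prop)
    (annM : ∀ (w t : R) (x : M), w • x = eM → (t • x = 0 ↔ A w t))
    (annN : ∀ (w t : R) (x : N), w • x = eN → (t • x = 0 ↔ A w t))
    (divM : ∀ c : R, c ≠ 0 → ∀ m : M, ∃ x, c • x = m)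
    (divN : ∀ c : R, c ≠ 0 → ∀ m : N, ∃ x, c • x = m)
    (uniM : ∀ x y : M, (∃ c : R, x = c • y) ∨ (∃ c : R, y = c • x))
    (uniN : ∀ x y : N, (∃ c : R, x = c • y) ∨ (∃ c : R, y = c • x)) :
    ∃ f : M ≃ₗ[R] N, f eM = eN := by
  haveI : Nonempty M := ⟨eM⟩
  haveI : Nonempty N := ⟨eN⟩
  obtain ⟨xM, hxM⟩ := exists_surjective_nat M
  obtain ⟨dN, hdN⟩ := exists_surjective_nat N
  have step : ∀ (n : ℕ) (a : M) (b : N), ∃ (a' : M) (b' : N),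
      (∃ u : R, u • a = eM ∧ u • b = eN) →
      ((∃ u : R, u • a' = eM ∧ u • b' = eN) ∧
       (∃ c : R, a = c • a' ∧ b = c • b') ∧
       (∃ t : R, xM n = t • a') ∧ (∃ t : R, dN n = t • b')) := by
    intro n a b
    by_cases hinv : ∃ u : R, u • a = eM ∧ u • b = eN
    · obtain ⟨u, hu1, hu2⟩ := hinv
      have ha : a ≠ 0 := fun h => hM0 (by rw [← hu1, h, smul_zero])
      have hA : ∃ (a₁ : M) (b₁ : N) (u₁ : R), u₁ • a₁ = eM ∧ u₁ • b₁ = eN ∧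
          (∃ c : R, a = c • a₁ ∧ b = c • b₁) ∧ (∃ t : R, xM n = t • a₁) := by
        rcases uniM (xM n) a with ⟨t, ht⟩ | ⟨c, hc⟩
        · exact ⟨a, b, u, hu1, hu2, ⟨1, (one_smul R a).symm, (one_smul R b).symm⟩, ⟨t, ht⟩⟩
        · have hc0 : c ≠ 0 := fun h => ha (by rw [hc, h, zero_smul])
          obtain ⟨b₁, hb₁⟩ := divN c hc0 b
          exact ⟨xM n, b₁, u * c, by rw [mul_smul, ← hc, hu1],
            by rw [mul_smul, hb₁, hu2], ⟨c, hc, hb₁.symm⟩, ⟨1, (one_smul _ _).symm⟩⟩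
      obtain ⟨a₁, b₁, u₁, h11, h12, ⟨c₀, hca, hcb⟩, ⟨tx, htx⟩⟩ := hA
      have hb1 : b₁ ≠ 0 := fun h => hN0 (by rw [← h12, h, smul_zero])
      rcases uniN (dN n) b₁ with ⟨t, ht⟩ | ⟨c, hc⟩
      · exact ⟨a₁, b₁, fun _ => ⟨⟨u₁, h11, h12⟩, ⟨c₀, hca, hcb⟩, ⟨tx, htx⟩, ⟨t, ht⟩⟩⟩
      · have hc0 : c ≠ 0 := fun h => hb1 (by rw [hc, h, zero_smul])
        obtain ⟨a₂, ha₂⟩ := divM c hc0 a₁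
        refine ⟨a₂, dN n, fun _ => ⟨⟨u₁ * c, ?_, ?_⟩, ⟨c₀ * c, ?_, ?_⟩,
          ⟨tx * c, ?_⟩, ⟨1, (one_smul _ _).symm⟩⟩⟩
        · rw [mul_smul, ha₂, h11]
        · rw [mul_smul, ← hc, h12]
        · rw [mul_smul, ha₂]; exact hca
        · rw [mul_smul, ← hc]; exact hcb
        · rw [mul_smul, ha₂]; exact htx
    · exact ⟨a, b, fun h => absurd h hinv⟩
  choose stepA stepB hstep using step
  let seq : ℕ → M × N := fun n =>
    Nat.rec (eM, eN) (fun k p => (stepA k p.1 p.2, stepB k p.1 p.2)) n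
  let a : ℕ → M := fun n => (seq n).1
  let b : ℕ → N := fun n => (seq n).2
  have inv : ∀ n, ∃ u : R, u • a n = eM ∧ u • b n = eN := by
    intro n
    induction n with
    | zero => exact ⟨1, one_smul _ _, one_smul _ _⟩
    | succ k ih => exact (hstep k (a k) (b k) ih).1
  have props : ∀ n, (∃ c : R, a n = c • a (n+1) ∧ b n = c • b (n+1)) ∧
      (∃ t : R, xM n = t • a (n+1)) ∧ (∃ t : R, dN n = t • b (n+1)) := by
    intro n
    obtain ⟨h1, h2, h3, h4⟩ := hstep n (a n) (b n) (inv n)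
    exact ⟨h2, h3, h4⟩
  have mono : ∀ n m, n ≤ m → ∃ c : R, a n = c • a m ∧ b n = c • b m := by
    intro n m h
    induction m, h using Nat.le_induction with
    | base => exact ⟨1, (one_smul _ _).symm, (one_smul _ _).symm⟩
    | succ m _ ih =>
        obtain ⟨c, h1, h2⟩ := ih
        obtain ⟨c', h1', h2'⟩ := (props m).1
        exact ⟨c * c', by rw [mul_smul, ← h1', h1], by rw [mul_smul, ← h2', h2]⟩
  have annEq : ∀ (n : ℕ) (t : R), t • a n = 0 ↔ t • b n = 0 := by
    intro n t
    obtain ⟨u, h1, h2⟩ := inv n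
    rw [annM u t (a n) h1, ← annN u t (b n) h2]
  have transfer_le : ∀ n m, n ≤ m → ∀ t s : R, t • a n = s • a m → t • b n = s • b m := by
    intro n m h t s hts
    obtain ⟨c, h1, h2⟩ := mono n m h
    have h0 : (t * c - s) • a m = 0 := by
      rw [sub_smul, mul_smul, ← h1, hts, sub_self]
    have h0' := (annEq m _).1 h0
    rw [sub_smul, sub_eq_zero] at h0'
    rw [h2, smul_smul]
    exact h0'
  have transfer : ∀ n m (t s : R), t • a n = s • a m → t • b n = s • b m := by
    intro n m t s hts
    rcases le_total n m with h | h
    · exact transfer_le n m h t s hts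
    · exact (transfer_le m n h s t hts.symm).symm
  have cover : ∀ q : M, ∃ (n : ℕ) (t : R), q = t • a n := by
    intro q
    obtain ⟨m, rfl⟩ := hxM q
    obtain ⟨t, ht⟩ := (props m).2.1
    exact ⟨m + 1, t, ht⟩
  have coverD : ∀ d : N, ∃ (n : ℕ) (t : R), d = t • b n := by
    intro d
    obtain ⟨m, rfl⟩ := hdN d
    obtain ⟨t, ht⟩ := (props m).2.2
    exact ⟨m + 1, t, ht⟩
  choose nq tq hq using cover
  let F : M → N := fun q => tq q • b (nq q)
  have Fspec : ∀ (q : M) (n : ℕ) (t : R), q = t • a n → F q = t • b n := by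
    intro q n t h
    exact transfer (nq q) n (tq q) t (by rw [← hq q, ← h])
  have repLe : ∀ (q : M) (n : ℕ) (t : R), q = t • a n → ∀ m, n ≤ m →
      ∃ t' : R, q = t' • a m ∧ t • b n = t' • b m := by
    intro q n t h m hm
    obtain ⟨c, h1, h2⟩ := mono n m hm
    exact ⟨t * c, by rw [mul_smul, ← h1, ← h], by rw [mul_smul, ← h2]⟩
  have Fadd : ∀ q q', F (q + q') = F q + F q' := by
    intro q q'
    obtain ⟨t1, h1, hb1⟩ := repLe q (nq q) (tq q) (hq q) (max (nq q) (nq q')) (le_max_left _ _)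
    obtain ⟨t2, h2, hb2⟩ := repLe q' (nq q') (tq q') (hq q') (max (nq q) (nq q')) (le_max_right _ _)
    have hsum : q + q' = (t1 + t2) • a (max (nq q) (nq q')) := by rw [add_smul, ← h1, ← h2]
    rw [Fspec _ _ _ hsum, add_smul]
    show _ = tq q • b (nq q) + tq q' • b (nq q')
    rw [hb1, hb2]
  have Fsmul : ∀ (c : R) (q : M), F (c • q) = c • F q := by
    intro c q
    have h : c • q = (c * tq q) • a (nq q) := by rw [mul_smul, ← hq q]
    rw [Fspec _ _ _ h, mul_smul]
  let Flin : M →ₗ[R] N :=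
    { toFun := F, map_add' := Fadd, map_smul' := Fsmul }
  have Finj : Function.Injective Flin := by
    have h0 : ∀ q, Flin q = 0 → q = 0 := by
      intro q hq0
      have hb0 : tq q • b (nq q) = 0 := hq0
      rw [hq q]
      exact (annEq (nq q) (tq q)).2 hb0
    intro q q' h
    have hsub : Flin (q - q') = 0 := by rw [map_sub, h, sub_self]
    exact sub_eq_zero.mp (h0 _ hsub)
  have Fsurj : Function.Surjective Flin := by
    intro d
    obtain ⟨n, t, hd⟩ := coverD d
    refine ⟨t • a n, ?_⟩
    rw [show Flin (t • a n) = t • b n from Fspec _ n t rfl, hd]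
  have FeM : Flin eM = eN := by
    have h0 : eM = (1 : R) • a 0 := (one_smul _ _).symm
    rw [show Flin eM = F eM from rfl, Fspec eM 0 1 h0, one_smul]
    rfl
  exact ⟨LinearEquiv.ofBijective Flin ⟨Finj, Fsurj⟩, FeM⟩

/-- The key annihilator computation: if `e` is a nonzero element killed by the maximal
ideal and `w • x = e`, then `t • x = 0` iff `v t < v w`. -/
private lemma ann_key (v : Valuation K Γ₀) {X : Type*} [AddCommGroup X] [Module v.integer X]
    (e : X) (he : e ≠ 0) (hm : ∀ s : v.integer, s ∈ maxIdealO v → s • e = 0)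
    (w t : v.integer) (x : X) (hw : w • x = e) :
    t • x = 0 ↔ v (t : K) < v (w : K) := by
  have hw0 : w ≠ 0 := fun h => he (by rw [← hw, h, zero_smul])
  have hwK : (w : K) ≠ 0 := fun h => hw0 (Subtype.ext h)
  have hvw : (0 : Γ₀) < v (w : K) := by
    rw [zero_lt_iff]
    exact fun h0 => hwK (v.zero_iff.mp h0)
  constructor
  · intro ht
    by_contra hlt
    rw [not_lt] at hlt
    have htK : (t : K) ≠ 0 := by
      intro h0
      rw [h0, map_zero] at hlt
      exact absurd (le_antisymm hlt zero_le') (ne_of_gt hvw)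
    have hvt : (0 : Γ₀) < v (t : K) := by
      rw [zero_lt_iff]
      exact fun h0 => htK (v.zero_iff.mp h0)
    have hsmem : v ((w : K) / (t : K)) ≤ 1 := by
      rw [map_div₀]
      exact (div_le_one₀ hvt).mpr hlt
    set s : v.integer := ⟨(w : K) / (t : K), hsmem⟩ with hs
    have hst : s * t = w := Subtype.ext (by
      show (w : K) / (t : K) * (t : K) = (w : K)
      field_simp)
    have : e = s • (t • x) := by rw [← hw, ← hst, mul_smul]
    rw [ht, smul_zero] at this
    exact he this
  · intro hlt
    have hsmem : v ((t : K) / (w : K)) ≤ 1 := by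
      rw [map_div₀]
      exact le_of_lt ((div_lt_iff₀ hvw).mpr (by rwa [one_mul]))
    set s : v.integer := ⟨(t : K) / (w : K), hsmem⟩ with hs
    have hsm : s ∈ maxIdealO v := by
      show v ((Algebra.linearMap v.integer K) s) < 1
      show v ((s : K)) < 1
      show v ((t : K) / (w : K)) < 1
      rw [map_div₀]
      exact (div_lt_iff₀ hvw).mpr (by rwa [one_mul])
    have hst : s * w = t := Subtype.ext (by
      show (t : K) / (w : K) * (w : K) = (t : K)
      field_simp)
    rw [← hst, mul_smul, hw, hm s hsm]

/-- Let `K` be a valued field with valuation ring `𝒪`, maximal ideal `𝔪`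
and residue field `k`, and let `D` be a mock `K/𝔪`: a divisible `𝒪`-module equipped with an
embedding `ι : k ↪ D` such that any two elements of `D` are comparable under divisibility
by `𝒪`.  If `K` and `D` are countable, then `D` is isomorphic to `K/𝔪` as an `𝒪`-module
extension of `k`. -/
theorem mock_quotient_iso (v : Valuation K Γ₀) [Countable K]
    (D : Type*) [AddCommGroup D] [Module v.integer D] [Countable D]
    (ι : (v.integer ⧸ maxIdealO v) →ₗ[v.integer] D) (hι : Function.Injective ι)
    (hdiv : ∀ a : v.integer, a ≠ 0 → ∀ d : D, ∃ x : D, a • x = d)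
    (hmock : ∀ x y : D, (∃ c : v.integer, x = c • y) ∨ (∃ c : v.integer, y = c • x)) :
    ∃ f : (K ⧸ maxIdealSub v) ≃ₗ[v.integer] D,
      ∀ z : v.integer ⧸ maxIdealO v, f (residueToQuot v z) = ι z := by
  classical
  haveI : Countable (K ⧸ maxIdealSub v) := Quotient.countable
  let eM : K ⧸ maxIdealSub v := Submodule.Quotient.mk (1 : K)
  let eN : D := ι (Submodule.Quotient.mk (1 : v.integer))
  have hone : (1 : K) ∉ maxIdealSub v := by
    show ¬ v (1 : K) < 1
    rw [v.map_one]
    exact lt_irrefl 1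
  have honeO : (1 : v.integer) ∉ maxIdealO v := by
    show ((1 : v.integer) : K) ∉ maxIdealSub v
    rwa [OneMemClass.coe_one]
  have hM0 : eM ≠ 0 := by
    rw [Ne, Submodule.Quotient.mk_eq_zero]
    exact hone
  have hN0 : eN ≠ 0 := by
    intro h
    rw [show (0 : D) = ι 0 from (map_zero ι).symm] at h
    have := hι h
    rw [Submodule.Quotient.mk_eq_zero] at this
    exact honeO this
  have hmM : ∀ s : v.integer, s ∈ maxIdealO v → s • eM = 0 := by
    intro s hs
    show s • (Submodule.Quotient.mk (1 : K) : K ⧸ maxIdealSub v) = 0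
    rw [← Submodule.Quotient.mk_smul, Submodule.Quotient.mk_eq_zero]
    show s • (1 : K) ∈ maxIdealSub v
    have : s • (1 : K) = (s : K) := by
      show (s : K) * 1 = (s : K)
      rw [mul_one]
    rw [this]
    exact hs
  have hmN : ∀ s : v.integer, s ∈ maxIdealO v → s • eN = 0 := by
    intro s hs
    show s • ι (Submodule.Quotient.mk (1 : v.integer)) = 0
    rw [← map_smul, ← Submodule.Quotient.mk_smul, smul_eq_mul, mul_one]
    have : (Submodule.Quotient.mk s : v.integer ⧸ maxIdealO v) = 0 := by
      rw [Submodule.Quotient.mk_eq_zero]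
      exact hs
    rw [this, map_zero]
  have annM : ∀ (w t : v.integer) (x : K ⧸ maxIdealSub v), w • x = eM →
      (t • x = 0 ↔ v (t : K) < v (w : K)) :=
    fun w t x hw => ann_key v eM hM0 hmM w t x hw
  have annN : ∀ (w t : v.integer) (x : D), w • x = eN → (t • x = 0 ↔ v (t : K) < v (w : K)) :=
    fun w t x hw => ann_key v eN hN0 hmN w t x hw
  have divM : ∀ c : v.integer, c ≠ 0 → ∀ m : K ⧸ maxIdealSub v, ∃ x, c • x = m := by
    intro c hc m
    obtain ⟨g, rfl⟩ := Submodule.Quotient.mk_surjective _ m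
    have hcK : (c : K) ≠ 0 := fun h => hc (Subtype.ext h)
    refine ⟨Submodule.Quotient.mk (g / (c : K)), ?_⟩
    rw [← Submodule.Quotient.mk_smul]
    congr 1
    show (c : K) * (g / (c : K)) = g
    field_simp
  have uniM : ∀ x y : K ⧸ maxIdealSub v,
      (∃ c : v.integer, x = c • y) ∨ (∃ c : v.integer, y = c • x) := by
    have helper : ∀ g h : K, v g ≤ v h →
        ∃ c : v.integer, (Submodule.Quotient.mk g : K ⧸ maxIdealSub v) = c • Submodule.Quotient.mk h := by
      intro g h hgh
      by_cases hh : h = 0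
      · have hg : g = 0 := by
          rw [hh, map_zero, le_zero_iff] at hgh
          exact v.zero_iff.mp hgh
        exact ⟨0, by simp [hg, hh]⟩
      · have hmem : v (g / h) ≤ 1 := by
          rw [map_div₀]
          have hvh : (0 : Γ₀) < v h := by
            rw [zero_lt_iff]; exact fun h0 => hh (v.zero_iff.mp h0)
          exact (div_le_one₀ hvh).mpr hgh
        refine ⟨⟨g / h, hmem⟩, ?_⟩
        rw [← Submodule.Quotient.mk_smul]
        congr 1
        show g = g / h * h
        field_simp
    intro x y
    obtain ⟨g, rfl⟩ := Submodule.Quotient.mk_surjective _ x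
    obtain ⟨h, rfl⟩ := Submodule.Quotient.mk_surjective _ y
    rcases le_total (v g) (v h) with hle | hle
    · exact Or.inl (helper g h hle)
    · exact Or.inr (helper h g hle)
  obtain ⟨f, hf⟩ := exists_iso_aux eM eN hM0 hN0 (fun w t : v.integer => v (t : K) < v (w : K))
    annM annN divM hdiv uniM hmock
  refine ⟨f, ?_⟩
  intro z
  obtain ⟨t, rfl⟩ := Submodule.Quotient.mk_surjective _ z
  have h1 : residueToQuot v (Submodule.Quotient.mk t) =
      (Submodule.Quotient.mk ((t : K)) : K ⧸ maxIdealSub v) := by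
    rfl
  have h2 : (Submodule.Quotient.mk ((t : K)) : K ⧸ maxIdealSub v) = t • eM := by
    rw [← Submodule.Quotient.mk_smul]
    congr 1
    show (t : K) = (t : K) * 1
    rw [mul_one]
  have h3 : t • (Submodule.Quotient.mk (1 : v.integer) : v.integer ⧸ maxIdealO v) =
      Submodule.Quotient.mk t := by
    rw [← Submodule.Quotient.mk_smul, smul_eq_mul, mul_one]
  rw [h1, h2, map_smul, hf]
  show t • ι (Submodule.Quotient.mk (1 : v.integer)) = _
  rw [← map_smul, h3]
end

section
/- Let (K, 𝒪, 𝔪) be a valued field of equicharacteristic 0 and ∂ : 𝒪 → K/𝔪 a derivation such that every fiber {y ∈ 𝒪 : ∂y = x} (for x ∈ K/𝔪) is dense in 𝒪 in the valuation topology, and such that the valuation is nontrivial. Then with Q = {x ∈ 𝒪 : ∂x = 0}, the fraction field of Q equals K. -/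
variable {K Γ₀ : Type*} [Field K] [LinearOrderedCommGroupWithZero Γ₀]

/-- Let `(K, 𝒪, 𝔪)` be a valued field of equicharacteristic 0 with a
nontrivial valuation, and `∂ : 𝒪 → K/𝔪` a derivation all of whose fibers are dense in `𝒪`
for the valuation topology.  Then with `Q = {x ∈ 𝒪 : ∂x = 0}`, the fraction field of `Q`
equals `K`: every element of `K` is a ratio of two elements of `Q`. -/
theorem frac_of_constants_eq_field (v : Valuation K Γ₀) [CharZero K]
    (hres : ∀ m : ℕ, m ≠ 0 → v (m : K) = 1)
    (hnontriv : ∃ x : K, x ≠ 0 ∧ v x ≠ 1)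
    (d : v.integer → K ⧸ maxIdealSub v)
    (hadd : ∀ x y : v.integer, d (x + y) = d x + d y)
    (hleib : ∀ x y : v.integer, d (x * y) = x • d y + y • d x)
    (hdense : ∀ (t : K ⧸ maxIdealSub v) (a : v.integer) (γ : Γ₀), γ ≠ 0 →
      ∃ y : v.integer, d y = t ∧ v ((y : K) - (a : K)) < γ) :
    ∀ a : K, ∃ p q : K,
      (∃ hp : p ∈ v.integer, d ⟨p, hp⟩ = 0) ∧
      (∃ hq : q ∈ v.integer, d ⟨q, hq⟩ = 0) ∧
      q ≠ 0 ∧ a = p / q := by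
  -- `d 1 = 0`
  have hd1 : d 1 = 0 := by
    have h := hleib 1 1
    simp only [mul_one, one_smul] at h
    exact right_eq_add.mp h
  -- a nonzero element of small valuation
  obtain ⟨x, hx0, hx1⟩ := hnontriv
  obtain ⟨z, hz0, hz1⟩ : ∃ z : K, v z ≠ 0 ∧ v z < 1 := by
    rcases lt_or_gt_of_ne hx1 with h | h
    · exact ⟨x, by simp [hx0], h⟩
    · refine ⟨x⁻¹, by simp [hx0], ?_⟩
      rw [map_inv₀]
      exact (inv_lt_one₀ (zero_lt_one.trans h)).mpr h
  -- main case: `a` in the valuation ring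
  have main : ∀ a : v.integer, ∃ p q : K,
      (∃ hp : p ∈ v.integer, d ⟨p, hp⟩ = 0) ∧
      (∃ hq : q ∈ v.integer, d ⟨q, hq⟩ = 0) ∧
      q ≠ 0 ∧ (a : K) = p / q := by
    intro a
    by_cases hda : d a = 0
    · refine ⟨(a : K), 1, ⟨a.2, ?_⟩, ⟨?_, ?_⟩, one_ne_zero, by simp⟩
      · simpa using hda
      · simp [Valuation.mem_integer_iff]
      · exact hd1
    · obtain ⟨c, hc⟩ : ∃ c : K, Submodule.Quotient.mk c = d a :=
        Submodule.Quotient.mk_surjective _ (d a)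
      have hc1 : (1 : Γ₀) ≤ v c := by
        by_contra h
        have : d a = 0 := by
          rw [← hc, Submodule.Quotient.mk_eq_zero]
          exact not_le.mp h
        exact hda this
      have hc0 : v c ≠ 0 := fun h => by simp [h] at hc1
      set a₀ : K := c⁻¹ * z with ha₀def
      have hva₀ : v a₀ = (v c)⁻¹ * v z := by rw [map_mul, map_inv₀]
      have hγ0 : v a₀ ≠ 0 := by
        rw [hva₀]; exact mul_ne_zero (inv_ne_zero hc0) hz0
      have hva₀1 : v a₀ < 1 := by
        rw [hva₀]
        calc (v c)⁻¹ * v z ≤ 1 * v z :=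
              mul_le_mul_left (inv_le_one₀ (zero_lt_one.trans_le hc1) |>.mpr hc1) _
          _ = v z := one_mul _
          _ < 1 := hz1
      obtain ⟨y, hdy, hy⟩ := hdense 0 ⟨a₀, le_of_lt hva₀1⟩ (v a₀) hγ0
      have hvy : v (y : K) = v a₀ := by
        have : (y : K) = ((y : K) - a₀) + a₀ := by ring
        rw [this, Valuation.map_add_eq_of_lt_right _ hy]
      have hy0 : (y : K) ≠ 0 := fun h => hγ0 (by rw [← hvy, h, map_zero])
      have hprod : d (y * a) = 0 := by
        rw [hleib, hdy, smul_zero, add_zero, ← hc]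
        have : y • (Submodule.Quotient.mk c : K ⧸ maxIdealSub v) =
            Submodule.Quotient.mk ((y : K) * c) := rfl
        rw [this, Submodule.Quotient.mk_eq_zero]
        show v ((y : K) * c) < 1
        rw [map_mul, hvy, hva₀, mul_comm ((v c)⁻¹) (v z), mul_assoc,
          inv_mul_cancel₀ hc0, mul_one]
        exact hz1
      refine ⟨(y : K) * (a : K), (y : K), ⟨mul_mem y.2 a.2, ?_⟩, ⟨y.2, ?_⟩, hy0,
        (mul_div_cancel_left₀ _ hy0).symm⟩
      · have : (⟨(y : K) * (a : K), mul_mem y.2 a.2⟩ : v.integer) = y * a := rfl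
        rw [this]; exact hprod
      · have : (⟨(y : K), y.2⟩ : v.integer) = y := rfl
        rw [this]; exact hdy
  intro a
  by_cases ha : v a ≤ 1
  · exact main ⟨a, ha⟩
  · have ha0 : a ≠ 0 := fun h => ha (by simp [h])
    have hainv : v a⁻¹ ≤ 1 := by
      rw [map_inv₀]
      exact le_of_lt ((inv_lt_one₀ (zero_lt_one.trans (not_le.mp ha))).mpr (not_le.mp ha))
    obtain ⟨p, q, hp, hq, hq0, heq⟩ := main ⟨a⁻¹, hainv⟩
    have hp0 : p ≠ 0 := by
      intro h
      rw [h, zero_div] at heq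
      exact inv_ne_zero ha0 heq
    refine ⟨q, p, hq, hp, hp0, ?_⟩
    rw [← inv_inv a]
    show ((a⁻¹ : K))⁻¹ = q / p
    rw [show (a⁻¹ : K) = p / q from heq, inv_div]
end

section
/- Let R be an integral domain, K = Frac(R), and suppose R ≠ K, R is local with maximal ideal I ≠ 0. Then the family {aR : a ∈ K^×} is a neighborhood basis of 0 for a nondiscrete Hausdorff ring topology on K: that is, (i) for a, b ∈ K^× there is c ∈ K^× with cR ⊆ aR ∩ bR; (ii) for every a ∈ K^× there is b ∈ K^× with bR + bR ⊆ aR and bR·bR ⊆ aR; (iii) for every a ∈ K^× and x ∈ K there is b ∈ K^× with x·bR ⊆ aR; (iv) ⋂_{a ∈ K^×} aR = {0}. -/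
/-- The basic neighborhood `aR = {a·r : r ∈ R}` of `0` in `K`. -/
def rball {K : Type*} [Field K] (R : Subring K) (a : K) : Set K :=
  (fun r => a * r) '' (R : Set K)

lemma mem_rball {K : Type*} [Field K] (R : Subring K) (a x : K) :
    x ∈ rball R a ↔ ∃ r ∈ R, a * r = x := by
  simp [rball, Set.mem_image]

/-- Let `R` be a proper local subring of a field `K` with `K = Frac R`
and nonzero maximal ideal.  Then the family `{aR : a ∈ K^×}` is a neighborhood basis of `0`
for a nondiscrete Hausdorff ring topology on `K`:
(i) any two basic sets contain a common basic set;
(ii) each basic set `aR` admits `bR` with `bR + bR ⊆ aR` and `bR·bR ⊆ aR`;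
(iii) each `aR` absorbs multiplication by any fixed `x ∈ K`;
(iv) the intersection of all basic sets is `{0}`. -/
theorem local_subring_topology {K : Type*} [Field K] (R : Subring K)
    [IsLocalRing R]
    (hproper : (R : Set K) ≠ Set.univ)
    (hfrac : ∀ x : K, ∃ p ∈ R, ∃ q ∈ R, q ≠ 0 ∧ x = p / q)
    (hI : IsLocalRing.maximalIdeal R ≠ ⊥) :
    (∀ a b : K, a ≠ 0 → b ≠ 0 →
        ∃ c : K, c ≠ 0 ∧ rball R c ⊆ rball R a ∩ rball R b) ∧
    (∀ a : K, a ≠ 0 → ∃ b : K, b ≠ 0 ∧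
        ∀ x ∈ rball R b, ∀ y ∈ rball R b, x + y ∈ rball R a ∧ x * y ∈ rball R a) ∧
    (∀ a : K, a ≠ 0 → ∀ x : K, ∃ b : K, b ≠ 0 ∧ ∀ y ∈ rball R b, x * y ∈ rball R a) ∧
    (∀ x : K, (∀ a : K, a ≠ 0 → x ∈ rball R a) ↔ x = 0) := by
  refine ⟨?_, ?_, ?_, ?_⟩
  · intro a b ha hb
    obtain ⟨p, hp, q, hq, hq0, hpq⟩ := hfrac a
    obtain ⟨p', hp', q', hq', hq'0, hpq'⟩ := hfrac b
    have haq : a * q = p := by rw [hpq]; field_simp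
    have hbq : b * q' = p' := by rw [hpq']; field_simp
    refine ⟨a * b * q * q', mul_ne_zero (mul_ne_zero (mul_ne_zero ha hb) hq0) hq'0, ?_⟩
    rintro x hx
    rw [mem_rball] at hx
    obtain ⟨r, hr, rfl⟩ := hx
    constructor
    · rw [mem_rball]
      exact ⟨p' * q * r, mul_mem (mul_mem hp' hq) hr, by
        rw [← hbq]; ring⟩
    · rw [mem_rball]
      exact ⟨p * q' * r, mul_mem (mul_mem hp hq') hr, by
        rw [← haq]; ring⟩
  · intro a ha
    obtain ⟨p, hp, q, hq, hq0, hpq⟩ := hfrac a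
    have haq : a * q = p := by rw [hpq]; field_simp
    have hp0 : p ≠ 0 := by rw [← haq]; exact mul_ne_zero ha hq0
    refine ⟨p, hp0, ?_⟩
    rintro x hx y hy
    rw [mem_rball] at hx hy
    obtain ⟨r, hr, rfl⟩ := hx
    obtain ⟨s, hs, rfl⟩ := hy
    constructor
    · rw [mem_rball]
      exact ⟨q * (r + s), mul_mem hq (add_mem hr hs), by rw [show a * (q * (r+s)) = (a*q)*(r+s) by ring, haq]; ring⟩
    · rw [mem_rball]
      exact ⟨q * p * (r * s), mul_mem (mul_mem hq hp) (mul_mem hr hs), by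
        rw [show a * (q * p * (r*s)) = (a*q)*(p*(r*s)) by ring, haq]; ring⟩
  · intro a ha x
    by_cases hx : x = 0
    · refine ⟨a, ha, ?_⟩
      intro y _
      rw [mem_rball]
      exact ⟨0, zero_mem R, by simp [hx]⟩
    · refine ⟨a / x, div_ne_zero ha hx, ?_⟩
      rintro y hy
      rw [mem_rball] at hy ⊢
      obtain ⟨r, hr, rfl⟩ := hy
      exact ⟨r, hr, by field_simp⟩
  · intro x
    constructor
    · intro h
      by_contra hx
      apply hproper
      ext z
      simp only [Set.mem_univ, iff_true]
      by_cases hz : z = 0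
      · simpa [hz] using zero_mem R
      · have := h (x / z) (div_ne_zero hx hz)
        rw [mem_rball] at this
        obtain ⟨r, hr, hxr⟩ := this
        have hrz : r = z := by
          field_simp at hxr
          exact hxr
        rwa [← hrz]
    · rintro rfl a ha
      rw [mem_rball]
      exact ⟨0, zero_mem R, by simp⟩
end

section
/- Let L/K be an algebraic extension of valued fields whose value group Γ_K (of K) is ℤ-less (for every γ > 0 in Γ_K there is δ ∈ Γ_K with γ < 3δ < 2γ). Let a ∈ 𝒪_L be nonzero with val(a) > 0 and aⁿ ∈ K for some n ≥ 1. Then there exist b, c ∈ 𝒪_L such that a = b·cⁿ, b·c^{n−1} ∈ K, and cⁿ ∈ K. -/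
private lemma zless_exists_k (n : ℕ) : ∃ k : ℕ, 2 ^ k * n ^ 2 < 3 ^ k := by
  obtain ⟨k, hk⟩ := pow_unbounded_of_one_lt ((n : ℚ) ^ 2) (by norm_num : (1 : ℚ) < 3 / 2)
  refine ⟨k, ?_⟩
  have h2 : (0 : ℚ) < 2 ^ k := by positivity
  rw [div_pow, lt_div_iff₀ h2] at hk
  have : ((2 : ℚ)) ^ k * (n : ℚ) ^ 2 < 3 ^ k := by linarith
  exact_mod_cast this

private lemma zless_step {L Γ₀ : Type*} [Field L]
    [LinearOrderedCommGroupWithZero Γ₀] (v : Valuation L Γ₀) (K : Subfield L)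
    (hzless : ∀ x : L, x ∈ K → x ≠ 0 → v x < 1 →
      ∃ y : L, y ∈ K ∧ y ≠ 0 ∧ (v x) ^ 2 < (v y) ^ 3 ∧ (v y) ^ 3 < v x) :
    ∀ k : ℕ, ∀ x : L, x ∈ K → x ≠ 0 → v x < 1 →
      ∃ y : L, y ∈ K ∧ y ≠ 0 ∧ (v x) ^ (2 ^ (k + 1)) < (v y) ^ (3 ^ (k + 1)) ∧
        (v y) ^ (3 ^ (k + 1)) < v x := by
  intro k
  induction k with
  | zero => simpa using hzless
  | succ k ih =>
    intro x hxK hx0 hvx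
    obtain ⟨y₁, hy₁K, hy₁0, h₁low, h₁high⟩ := hzless x hxK hx0 hvx
    have hvy₁ : v y₁ < 1 := by
      by_contra h
      push_neg at h
      have : (1 : Γ₀) ≤ (v y₁) ^ 3 := by
        calc (1 : Γ₀) = 1 ^ 3 := (one_pow 3).symm
          _ ≤ (v y₁) ^ 3 := pow_le_pow_left₀ zero_le_one h 3
      exact absurd (h₁high.trans hvx) (not_lt.mpr this)
    obtain ⟨y, hyK, hy0, hlow, hhigh⟩ := ih y₁ hy₁K hy₁0 hvy₁
    refine ⟨y, hyK, hy0, ?_, ?_⟩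
    · have h1 : ((v x) ^ 2) ^ (2 ^ (k + 1)) < ((v y₁) ^ 3) ^ (2 ^ (k + 1)) :=
        pow_lt_pow_left₀ h₁low zero_le' (by positivity)
      have h2 : ((v y₁) ^ (2 ^ (k + 1))) ^ 3 < ((v y) ^ (3 ^ (k + 1))) ^ 3 :=
        pow_lt_pow_left₀ hlow zero_le' (by norm_num)
      calc (v x) ^ (2 ^ (k + 2)) = ((v x) ^ 2) ^ (2 ^ (k + 1)) := by
            rw [← pow_mul, ← pow_succ']
        _ < ((v y₁) ^ 3) ^ (2 ^ (k + 1)) := h1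
        _ = ((v y₁) ^ (2 ^ (k + 1))) ^ 3 := by rw [← pow_mul, ← pow_mul, Nat.mul_comm]
        _ < ((v y) ^ (3 ^ (k + 1))) ^ 3 := h2
        _ = (v y) ^ (3 ^ (k + 2)) := by rw [← pow_mul, ← pow_succ]
    · have h2 : ((v y) ^ (3 ^ (k + 1))) ^ 3 < (v y₁) ^ 3 :=
        pow_lt_pow_left₀ hhigh zero_le' (by norm_num)
      calc (v y) ^ (3 ^ (k + 2)) = ((v y) ^ (3 ^ (k + 1))) ^ 3 := by
            rw [← pow_mul, ← pow_succ]
        _ < (v y₁) ^ 3 := h2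
        _ < v x := h₁high

/-- Let `L/K` be an algebraic extension of valued fields (here `K` is a
subfield of `L`, the valuation `v` on `L` is written multiplicatively, and every element of
`L` is algebraic over `K`).  Assume the value group of `K` is ℤ-less: for every `γ = v x`
with `x ∈ K^×` and `γ < 1` (additively `val x > 0`) there is `y ∈ K^×` with
`γ² < (v y)³ < γ` (additively `val x < 3·val y < 2·val x`).  If `a ∈ 𝒪_L` is nonzero with
`val a > 0` (i.e. `v a < 1`) and `aⁿ ∈ K` for some `n ≥ 1`, then there are `b, c ∈ 𝒪_L`
with `a = b·cⁿ`, `b·c^{n−1} ∈ K` and `cⁿ ∈ K`. -/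
theorem zless_radical_factorization {L Γ₀ : Type*} [Field L]
    [LinearOrderedCommGroupWithZero Γ₀] (v : Valuation L Γ₀)
    (K : Subfield L)
    (halg : ∀ x : L, ∃ p : Polynomial L, p ≠ 0 ∧ (∀ i, p.coeff i ∈ K) ∧ p.eval x = 0)
    (hzless : ∀ x : L, x ∈ K → x ≠ 0 → v x < 1 →
      ∃ y : L, y ∈ K ∧ y ≠ 0 ∧ (v x) ^ 2 < (v y) ^ 3 ∧ (v y) ^ 3 < v x)
    (n : ℕ) (hn : 1 ≤ n) (a : L) (ha : a ≠ 0) (hva : v a < 1) (haK : a ^ n ∈ K) :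
    ∃ b c : L, v b ≤ 1 ∧ v c ≤ 1 ∧ a = b * c ^ n ∧ b * c ^ (n - 1) ∈ K ∧ c ^ n ∈ K := by
  obtain ⟨m, rfl⟩ : ∃ m, n = m + 1 := ⟨n - 1, (Nat.succ_pred_eq_of_pos hn).symm⟩
  set n := m + 1 with hn_def
  have hn0 : n ≠ 0 := Nat.succ_ne_zero m
  set α := v a with hα_def
  have hα0 : α ≠ 0 := v.ne_zero_iff.mpr ha
  have hαpos : (0 : Γ₀) < α := zero_lt_iff.mpr hα0
  -- pick k with 2^(k+1) * n^2 < 3^(k+1)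
  obtain ⟨k, hk⟩ := zless_exists_k n
  have h3pos : 0 < 3 ^ k := pow_pos (by norm_num) k
  have hE : 2 ^ (k + 1) * n ^ 2 < 3 ^ (k + 1) := by
    calc 2 ^ (k + 1) * n ^ 2 = 2 * (2 ^ k * n ^ 2) := by ring
      _ < 2 * 3 ^ k := (Nat.mul_lt_mul_left (by norm_num)).mpr hk
      _ ≤ 3 * 3 ^ k := Nat.mul_le_mul_right _ (by norm_num)
      _ = 3 ^ (k + 1) := (pow_succ' 3 k).symm
  -- apply iterated ℤ-lessness to a^n
  have hx0 : a ^ n ≠ 0 := pow_ne_zero _ ha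
  have hvx1 : v (a ^ n) < 1 := by
    rw [map_pow]
    exact pow_lt_one₀ zero_le' hva hn0
  obtain ⟨y, hyK, hy0, hlow, hhigh⟩ := zless_step v K hzless k (a ^ n) haK hx0 hvx1
  rw [map_pow] at hlow hhigh
  set μ := v y with hμ_def
  have hμ0 : μ ≠ 0 := v.ne_zero_iff.mpr hy0
  set E2 := 2 ^ (k + 1) with hE2_def
  set E3 := 3 ^ (k + 1) with hE3_def
  have hE3pos : 0 < E3 := pow_pos (by norm_num) _
  -- (i)  α^n < μ^(n^2)
  have hμn2 : α ^ n < μ ^ (n ^ 2) := by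
    refine lt_of_pow_lt_pow_left₀ E3 zero_le' ?_
    calc (α ^ n) ^ E3 = α ^ (n * E3) := by rw [← pow_mul]
      _ < α ^ (n * (E2 * n ^ 2)) :=
          pow_lt_pow_right_of_lt_one₀ hαpos hva ((Nat.mul_lt_mul_left (Nat.succ_pos m)).mpr hE)
      _ = ((α ^ n) ^ E2) ^ (n ^ 2) := by rw [← pow_mul, ← pow_mul]
      _ < (μ ^ E3) ^ (n ^ 2) := pow_lt_pow_left₀ hlow zero_le' (by positivity)
      _ = (μ ^ (n ^ 2)) ^ E3 := by rw [← pow_mul, ← pow_mul]; congr 1; ring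
  -- (ii)  α < μ^n
  have hμn : α < μ ^ n := by
    refine lt_of_pow_lt_pow_left₀ n zero_le' ?_
    calc α ^ n < μ ^ (n ^ 2) := hμn2
      _ = (μ ^ n) ^ n := by rw [← pow_mul, sq]
  -- the set of good exponents is nonempty
  have hPne : (μ ^ E3) ^ n < α ^ m := by
    calc (μ ^ E3) ^ n < (α ^ n) ^ n := pow_lt_pow_left₀ hhigh zero_le' hn0
      _ = α ^ (n * n) := by rw [← pow_mul]
      _ ≤ α ^ m := pow_le_pow_right_of_le_one' hva.le (by nlinarith)
  have hex : ∃ q : ℕ, (μ ^ q) ^ n < α ^ m := ⟨E3, hPne⟩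
  set p := Nat.find hex with hp_def
  have hp : (μ ^ p) ^ n < α ^ m := Nat.find_spec hex
  have hp0 : p ≠ 0 := by
    intro h
    rw [h] at hp
    simp only [pow_zero, one_pow] at hp
    exact absurd hp (not_lt.mpr (pow_le_one₀ zero_le' hva.le))
  have hmin : α ^ m ≤ (μ ^ (p - 1)) ^ n :=
    not_lt.mp (Nat.find_min hex (Nat.pred_lt hp0))
  -- (iv)  α < μ^p
  obtain ⟨q, hq⟩ : ∃ q, p = q + 1 :=
    ⟨p - 1, (Nat.succ_pred_eq_of_pos (Nat.pos_of_ne_zero hp0)).symm⟩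
  have hq1 : p - 1 = q := by omega
  rw [hq1] at hmin
  have hcp : α < μ ^ p := by
    refine lt_of_pow_lt_pow_left₀ n zero_le' ?_
    have h1 : α ^ m * α < (μ ^ q) ^ n * μ ^ n :=
      mul_lt_mul_of_le_of_lt_of_nonneg_of_pos hmin hμn zero_le' (zero_lt_iff.mpr (pow_ne_zero _ (pow_ne_zero _ hμ0)))
    calc α ^ n = α ^ m * α := by rw [pow_succ]
      _ < (μ ^ q) ^ n * μ ^ n := h1
      _ = (μ ^ p) ^ n := by
          rw [← pow_mul, ← pow_mul, ← pow_add, hq]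
          congr 1
          ring
  -- now construct b and c
  have hyp0 : y ^ p ≠ 0 := pow_ne_zero _ hy0
  refine ⟨y ^ (p * n) / a ^ m, a / y ^ p, ?_, ?_, ?_, ?_, ?_⟩
  · rw [map_div₀, map_pow, map_pow]
    rw [div_le_one₀ (zero_lt_iff.mpr (pow_ne_zero _ hα0))]
    rw [pow_mul]
    exact hp.le
  · rw [map_div₀, map_pow]
    exact (div_le_one₀ (zero_lt_iff.mpr (pow_ne_zero _ hμ0))).mpr hcp.le
  · field_simp
    rw [div_pow, ← pow_mul]
    field_simp
    rw [hn_def]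
    ring
  · have : y ^ (p * n) / a ^ m * (a / y ^ p) ^ (n - 1) = y ^ p := by
      have hm : n - 1 = m := by omega
      rw [hm]
      field_simp
      rw [div_pow, ← pow_mul]
      field_simp
      rw [hn_def]
      ring
    rw [this]
    exact K.pow_mem hyK p
  · have : (a / y ^ p) ^ n = a ^ n / y ^ (p * n) := by
      rw [div_pow, ← pow_mul]
    rw [this]
    exact K.div_mem haK (K.pow_mem hyK _)
end

section
/- Let 𝒪 be a valuation ring and M an 𝒪-module. Then the following are equivalent: (1) M is flat; (2) M is torsion-free (for nonzero r ∈ 𝒪 and m ∈ M, r·m = 0 implies m = 0); (3) every finitely generated submodule of M is free. -/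
open Submodule LinearMap TensorProduct

section Aux

variable {O M : Type*} [CommRing O] [IsDomain O] [ValuationRing O]
  [AddCommGroup M] [Module O M]

private lemma exists_min_dvd {ι : Type*} (s : Finset ι) (hs : s.Nonempty) (g : ι → O) :
    ∃ j ∈ s, ∀ i ∈ s, g j ∣ g i := by
  classical
  induction s using Finset.induction with
  | empty => simp at hs
  | @insert a s ha ih =>
    rcases s.eq_empty_or_nonempty with rfl | hs'
    · exact ⟨a, by simp, by simp⟩
    · obtain ⟨j, hj, hjd⟩ := ih hs'
      rcases ValuationRing.dvd_total (g a) (g j) with h | h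
      · refine ⟨a, Finset.mem_insert_self _ _, fun i hi => ?_⟩
        rcases Finset.mem_insert.mp hi with rfl | hi
        · exact dvd_rfl
        · exact h.trans (hjd i hi)
      · refine ⟨j, Finset.mem_insert_of_mem hj, fun i hi => ?_⟩
        rcases Finset.mem_insert.mp hi with rfl | hi
        · exact h
        · exact hjd i hi

private lemma free_span_of_torsionfree
    (htf : ∀ (r : O) (m : M), r ≠ 0 → r • m = 0 → m = 0) :
    ∀ (n : ℕ) (s : Finset M), s.card = n → Module.Free O (span O (s : Set M)) := by
  classical
  intro n
  induction n using Nat.strong_induction_on with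
  | _ n ih =>
    intro s hcard
    by_cases hli : LinearIndependent O (fun x : s => (x : M))
    · exact Module.Free.of_basis
        ((Module.Basis.span hli).map (LinearEquiv.ofEq _ _ (by rw [Subtype.range_coe_subtype]; ext; simp)))
    · obtain ⟨g, hsum, j₀, hj₀⟩ := Fintype.not_linearIndependent_iff.mp hli
      -- pick a divisibility-minimal nonzero coefficient
      obtain ⟨j, hjmem, hjd⟩ :=
        exists_min_dvd (Finset.univ.filter fun i : s => g i ≠ 0)
          ⟨j₀, by simpa using hj₀⟩ g
      have hgj : g j ≠ 0 := (Finset.mem_filter.mp hjmem).2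
      have hdvd : ∀ i : s, g j ∣ g i := by
        intro i
        by_cases h : g i = 0
        · exact h ▸ dvd_zero _
        · exact hjd i (Finset.mem_filter.mpr ⟨Finset.mem_univ _, h⟩)
      choose b hb using hdvd
      have hbj : b j = 1 := by
        have := hb j
        nth_rewrite 1 [show g j = g j * 1 by ring] at this
        exact (mul_left_cancel₀ hgj this).symm
      have hsum' : ∑ i : s, b i • (i : M) = 0 := by
        refine htf (g j) _ hgj ?_
        rw [Finset.smul_sum]
        rw [← hsum]
        refine Finset.sum_congr rfl fun i _ => ?_
        rw [smul_smul, ← hb i]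
      have hjs : (j : M) ∈ s := j.2
      have hmem : (j : M) ∈ span O ((s.erase (j : M)) : Set M) := by
        have h1 : (j : M) = -∑ i ∈ Finset.univ.erase j, b i • (i : M) := by
          have := Finset.add_sum_erase Finset.univ (fun i : s => b i • (i : M))
            (Finset.mem_univ j)
          simp only [hsum', hbj, one_smul] at this
          exact eq_neg_of_add_eq_zero_left this
        rw [show ((j : M) ∈ span O ((s.erase (j : M)) : Set M)) ↔
            ((-∑ i ∈ Finset.univ.erase j, b i • (i : M)) ∈ span O ((s.erase (j : M)) : Set M))
          from by rw [← h1]]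
        refine neg_mem (Submodule.sum_mem _ fun i hi => ?_)
        refine Submodule.smul_mem _ _ (subset_span ?_)
        simp only [Finset.coe_erase, Set.mem_diff, Set.mem_singleton_iff]
        exact ⟨i.2, fun h => (Finset.mem_erase.mp hi).1 (Subtype.ext h)⟩
      have hspan : span O ((s.erase (j : M)) : Set M) = span O (s : Set M) := by
        conv_rhs => rw [← Finset.insert_erase hjs]
        rw [Finset.coe_insert, span_insert_eq_span hmem]
      have hn : 0 < n := hcard ▸ Finset.card_pos.mpr ⟨_, hjs⟩
      have := ih (n - 1) (by omega) (s.erase (j : M))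
        (by rw [Finset.card_erase_of_mem hjs, hcard])
      exact hspan ▸ this

private lemma exists_fg_lTensor {R A M : Type*} [CommRing R] [AddCommGroup A] [Module R A]
    [AddCommGroup M] [Module R M] (x : A ⊗[R] M) :
    ∃ (N : Submodule R M), N.FG ∧ ∃ y : A ⊗[R] N, x = lTensor A N.subtype y := by
  induction x with
  | zero => exact ⟨⊥, fg_bot, 0, by simp⟩
  | tmul a m =>
    exact ⟨R ∙ m, fg_span_singleton m, a ⊗ₜ ⟨m, mem_span_singleton_self m⟩, rfl⟩
  | add x₁ x₂ ih₁ ih₂ =>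
    obtain ⟨N₁, h₁, y₁, rfl⟩ := ih₁
    obtain ⟨N₂, h₂, y₂, rfl⟩ := ih₂
    refine ⟨N₁ ⊔ N₂, h₁.sup h₂,
      lTensor A (N₁.inclusion le_sup_left) y₁ + lTensor A (N₂.inclusion le_sup_right) y₂, ?_⟩
    rw [map_add, ← lTensor_comp_apply, ← lTensor_comp_apply]
    rfl

end Aux

/-- Let `𝒪` be a valuation ring and `M` an `𝒪`-module.  The following
are equivalent: (1) `M` is flat; (2) `M` is torsion-free; (3) every finitely generated
submodule of `M` is free. -/
theorem valuationRing_flat_tfae {O M : Type*} [CommRing O] [IsDomain O] [ValuationRing O]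
    [AddCommGroup M] [Module O M] :
    List.TFAE [Module.Flat O M,
      ∀ (r : O) (m : M), r ≠ 0 → r • m = 0 → m = 0,
      ∀ N : Submodule O M, N.FG → Module.Free O N] := by
  tfae_have 1 → 2 := by
    intro hflat r m hr hrm
    have hreg : IsSMulRegular O r := isRegular_of_ne_zero hr |>.left
    have h2 : IsSMulRegular (M ⊗[O] O) r := hreg.lTensor M
    have : r • (m ⊗ₜ[O] (1 : O)) = r • (0 : M ⊗[O] O) := by
      rw [smul_zero, smul_tmul', hrm, zero_tmul]
    have h0 : m ⊗ₜ[O] (1 : O) = 0 := h2 this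
    have := congrArg (TensorProduct.rid O M) h0
    simpa using this
  tfae_have 2 → 3 := by
    intro htf N hN
    obtain ⟨s, hs⟩ := hN
    rw [← hs]
    exact free_span_of_torsionfree htf s.card s rfl
  tfae_have 3 → 1 := by
    intro h3
    rw [Module.Flat.iff_rTensor_injective']
    intro I
    refine (injective_iff_map_eq_zero _).mpr fun x hx => ?_
    obtain ⟨N, hNfg, y, rfl⟩ := exists_fg_lTensor x
    haveI hNfree : Module.Free O N := h3 N hNfg
    haveI hNflat : Module.Flat O N := Module.Flat.of_free
    have hL : Function.Injective (lTensor O N.subtype) :=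
      Module.Flat.lTensor_preserves_injective_linearMap _ N.injective_subtype
    have hR : Function.Injective (rTensor (↥N) I.subtype) :=
      Module.Flat.rTensor_preserves_injective_linearMap _ I.injective_subtype
    have hcomp : (rTensor M I.subtype).comp (lTensor (↥I) N.subtype)
        = (lTensor O N.subtype).comp (rTensor (↥N) I.subtype) := by
      rw [rTensor_comp_lTensor, lTensor_comp_rTensor]
    have h0 : (lTensor O N.subtype) ((rTensor (↥N) I.subtype) y) = 0 := by
      rw [← comp_apply, ← hcomp, comp_apply]; exact hx
    have hy : y = 0 := hR (by rw [map_zero]; exact hL (by rw [h0, map_zero]))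
    rw [hy, map_zero]
  tfae_finish
end

section
/- Let 𝒪 ⊆ 𝒪′ be an extension of valuation rings (a local injective ring homomorphism of valuation rings, with the maximal ideal of 𝒪 mapping into that of 𝒪′). Let M be an 𝒪-module. Then M is flat over 𝒪 if and only if M ⊗_𝒪 𝒪′ is flat over 𝒪′. -/
open scoped TensorProduct

open LinearMap

/-- Over a domain, a flat module is torsion-free: any nonzero scalar acts injectively. -/
lemma isSMulRegular_of_flat {R N : Type*} [CommRing R] [IsDomain R]
    [AddCommGroup N] [Module R N] [Module.Flat R N] {r : R} (hr : r ≠ 0) :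
    IsSMulRegular N r := by
  have h : IsSMulRegular R r := fun u v huv => by
    exact mul_left_cancel₀ hr (by simpa [smul_eq_mul] using huv)
  have h2 : IsSMulRegular (R ⊗[R] N) r := h.rTensor N
  exact h2.of_injective (TensorProduct.lid R N).symm.toLinearMap
    (TensorProduct.lid R N).symm.injective

/-- A torsion-free module over a Bézout domain is flat. -/
lemma flat_of_torsionFree {R N : Type*} [CommRing R] [IsDomain R] [IsBezout R]
    [AddCommGroup N] [Module R N]
    (ht : ∀ (a : R) (x : N), a • x = 0 → a = 0 ∨ x = 0) : Module.Flat R N := by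
  rw [Module.Flat.iff_rTensor_injective]
  intro I hI
  obtain ⟨a, ha⟩ := (IsBezout.isPrincipal_of_FG I hI).principal
  subst ha
  rcases eq_or_ne a 0 with rfl | ha0
  · rw [show Submodule.span R ({0} : Set R) = ⊥ from Submodule.span_zero_singleton R]
    intro u v _
    exact Subsingleton.elim u v
  · -- the span of `a` is isomorphic to `R`
    have hreg : IsSMulRegular N a := by
      intro x y hxy
      have hxy' : a • x = a • y := hxy
      have : a • (x - y) = 0 := by rw [smul_sub, hxy', sub_self]
      rcases ht a (x - y) this with h | h
      · exact absurd h ha0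
      · exact sub_eq_zero.mp h
    have hregR : IsSMulRegular R a := fun u v huv =>
      mul_left_cancel₀ ha0 (by simpa [smul_eq_mul] using huv)
    have hregT' : IsSMulRegular (R ⊗[R] N) a :=
      hreg.of_injective (TensorProduct.lid R N).toLinearMap
        (TensorProduct.lid R N).injective
    have key : (Submodule.span R {a}).subtype ∘ₗ
        (LinearEquiv.toSpanNonzeroSingleton R R a ha0).toLinearMap =
        DistribMulAction.toLinearMap R R a := by
      ext
      show ((LinearEquiv.toSpanNonzeroSingleton R R a ha0) 1 : R) = a • (1 : R)
      rw [LinearEquiv.toSpanNonzeroSingleton_one, smul_eq_mul, mul_one]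
    have hinj : Function.Injective
        (rTensor N (DistribMulAction.toLinearMap R R a)) := by
      rw [show DistribMulAction.toLinearMap R R a = DistribSMul.toLinearMap R R a from rfl,
        rTensor_smul_action]
      exact hregT'
    have hsurj : Function.Surjective
        (rTensor N (LinearEquiv.toSpanNonzeroSingleton R R a ha0).toLinearMap) :=
      LinearMap.rTensor_surjective N
        (g := (LinearEquiv.toSpanNonzeroSingleton R R a ha0).toLinearMap)
        (LinearEquiv.toSpanNonzeroSingleton R R a ha0).surjective
    intro u v huv
    obtain ⟨u', rfl⟩ := hsurj u
    obtain ⟨v', rfl⟩ := hsurj v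
    have hc : ∀ w, rTensor N (DistribMulAction.toLinearMap R R a) w =
        rTensor N (Submodule.span R {a}).subtype
          (rTensor N (LinearEquiv.toSpanNonzeroSingleton R R a ha0).toLinearMap w) := by
      intro w
      rw [← rTensor_comp_apply, key]
    exact congrArg _ (hinj (by rw [hc, hc]; exact huv))

/-- Let `𝒪 ⊆ 𝒪′` be an extension of valuation rings (an injective local
ring homomorphism of valuation rings) and `M` an `𝒪`-module.  Then `M` is flat over `𝒪` if
and only if `𝒪′ ⊗_𝒪 M` is flat over `𝒪′`. -/
theorem flat_iff_baseChange_flat {O O' M : Type*}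
    [CommRing O] [IsDomain O] [ValuationRing O]
    [CommRing O'] [IsDomain O'] [ValuationRing O'] [Algebra O O']
    (hinj : Function.Injective (algebraMap O O'))
    (hloc : ∀ x : O, IsUnit (algebraMap O O' x) → IsUnit x)
    [AddCommGroup M] [Module O M] :
    Module.Flat O M ↔ Module.Flat O' (O' ⊗[O] M) := by
  constructor
  · intro h
    infer_instance
  · intro h
    -- O' is torsion-free, hence flat, over O
    have hO' : Module.Flat O O' := by
      apply flat_of_torsionFree
      intro a z haz
      rw [Algebra.smul_def] at haz
      rcases mul_eq_zero.mp haz with h0 | h0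
      · left
        exact hinj (by rw [h0, map_zero])
      · right; exact h0
    apply flat_of_torsionFree
    intro a x hax
    by_contra hcon
    push_neg at hcon
    obtain ⟨ha, hx⟩ := hcon
    -- the annihilator of x
    set I : Ideal O := LinearMap.ker (LinearMap.toSpanSingleton O M x) with hIdef
    have hf : Function.Injective (I.liftQ (LinearMap.toSpanSingleton O M x) le_rfl) := by
      rw [← LinearMap.ker_eq_bot]
      exact Submodule.ker_liftQ_eq_bot _ _ _ le_rfl
    -- 1 ⊗ x ≠ 0
    have h1x : (1 : O') ⊗ₜ[O] x ≠ (0 : O' ⊗[O] M) := by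
      intro h0
      have hinj2 : Function.Injective
          (LinearMap.lTensor O' (I.liftQ (LinearMap.toSpanSingleton O M x) le_rfl)) :=
        Module.Flat.lTensor_preserves_injective_linearMap _ hf
      have e0 : (LinearMap.lTensor O' (I.liftQ (LinearMap.toSpanSingleton O M x) le_rfl))
          ((1 : O') ⊗ₜ (Ideal.Quotient.mk I (1 : O))) = 0 := by
        simp only [LinearMap.lTensor_tmul]
        have : (I.liftQ (LinearMap.toSpanSingleton O M x) le_rfl)
            (Ideal.Quotient.mk I (1 : O)) = x := by
          show (LinearMap.toSpanSingleton O M x) 1 = x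
          simp
        rw [this, h0]
      have hz : (1 : O') ⊗ₜ (Ideal.Quotient.mk I (1 : O)) = (0 : O' ⊗[O] (O ⧸ I)) :=
        hinj2 (by rw [e0, map_zero])
      -- transfer to O' ⧸ I•O'
      have hz' : (Submodule.Quotient.mk ((1 : O) • (1 : O')) :
          O' ⧸ (I • ⊤ : Submodule O O')) = 0 := by
        rw [← TensorProduct.tensorQuotEquivQuotSMul_tmul_mk, hz, LinearEquiv.map_zero]
      have h1mem : (1 : O') ∈ (I • (⊤ : Submodule O O') : Submodule O O') := by
        have := (Submodule.Quotient.mk_eq_zero _).mp hz'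
        simpa using this
      have hle : (I • (⊤ : Submodule O O') : Submodule O O') ≤
          (IsLocalRing.maximalIdeal O').restrictScalars O := by
        refine Submodule.smul_le.mpr fun i hi z _ => ?_
        rw [Algebra.smul_def]
        show algebraMap O O' i * z ∈ IsLocalRing.maximalIdeal O'
        refine Ideal.mul_mem_right _ _ ?_
        rw [IsLocalRing.mem_maximalIdeal, mem_nonunits_iff]
        intro hu
        have hiu : IsUnit i := hloc i hu
        have hix : i • x = 0 := hi
        exact hx (by rwa [hiu.smul_eq_zero] at hix)
      have h1m : (1 : O') ∈ IsLocalRing.maximalIdeal O' := hle h1mem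
      exact Ideal.IsMaximal.ne_top (IsLocalRing.maximalIdeal.isMaximal O')
        ((Ideal.eq_top_iff_one _).mpr h1m)
    -- but algebraMap a kills 1 ⊗ x and is regular
    have ha' : algebraMap O O' a ≠ 0 := fun h0 => ha (hinj (by rw [h0, map_zero]))
    have hreg : IsSMulRegular (O' ⊗[O] M) (algebraMap O O' a) :=
      isSMulRegular_of_flat (N := O' ⊗[O] M) ha'
    have hkill : (algebraMap O O' a) • ((1 : O') ⊗ₜ[O] x) = 0 := by
      rw [TensorProduct.smul_tmul', smul_eq_mul, mul_one,
        Algebra.algebraMap_eq_smul_one, TensorProduct.smul_tmul, hax,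
        TensorProduct.tmul_zero]
    refine h1x (hreg ?_)
    show (algebraMap O O' a) • ((1 : O') ⊗ₜ[O] x) =
      (algebraMap O O' a) • (0 : O' ⊗[O] M)
    rw [hkill, smul_zero]
end
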